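/- Let u, v : [0,∞) → ℝ^d satisfy the diagonal linear network gradient flow du/dt = -v ⊙ ∇L(u⊙v), dv/dt = -u ⊙ ∇L(u⊙v), and set θ = u ⊙ v and ξ(t) = -∫₀ᵗ ∇L(θ(s))ds. Assume that for every component i, u_i(0)² ≠ v_i(0)². Then for all t ≥ 0 and all i, θ_i(t) = (|u_i(0)² - v_i(0)²|/2) · sinh(2ξ_i(t) + log|(u_i(0)+v_i(0))/(u_i(0)-v_i(0))|). -/

import Mathlib

open Finset Set

/-- The gradient of `f : ℝ^d → ℝ`, given componentwise by the partial derivatives. -/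
noncomputable def grad {d : ℕ} (f : (Fin d → ℝ) → ℝ) (x : Fin d → ℝ) (i : Fin d) : ℝ :=
  fderiv ℝ f x (Pi.single i 1)

lemma key_alg (a b x : ℝ) (h1 : a + b ≠ 0) (h2 : a - b ≠ 0) :
    |a ^ 2 - b ^ 2| / 2 * Real.sinh (2 * x + Real.log |(a + b) / (a - b)|) =
      ((a + b) ^ 2 * Real.exp (2 * x) - (a - b) ^ 2 * Real.exp (-(2 * x))) / 4 := by
  have hp : |a + b| ≠ 0 := abs_ne_zero.mpr h1
  have hq : |a - b| ≠ 0 := abs_ne_zero.mpr h2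
  have hc : (0:ℝ) < |(a + b) / (a - b)| := abs_pos.mpr (div_ne_zero h1 h2)
  have habs : |a ^ 2 - b ^ 2| = |a + b| * |a - b| := by
    rw [← abs_mul]; ring_nf
  rw [Real.sinh_eq, Real.exp_add, Real.exp_log hc, neg_add, Real.exp_add,
    Real.exp_neg (Real.log _), Real.exp_log hc, habs, abs_div]
  have e1 : |a + b| ^ 2 = (a + b) ^ 2 := sq_abs _
  have e2 : |a - b| ^ 2 = (a - b) ^ 2 := sq_abs _
  field_simp
  linear_combination (4 * Real.exp (2*x)) * e1 - (4 * Real.exp (-(2*x))) * e2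

theorem stmt_12 {d : ℕ} (u v : ℝ → Fin d → ℝ) (Loss : (Fin d → ℝ) → ℝ)
    (hLoss : ContDiff ℝ 1 Loss)
    (θ : ℝ → Fin d → ℝ) (hθ : ∀ t i, θ t i = u t i * v t i)
    (hflowu : ∀ t ≥ (0:ℝ), ∀ i,
      HasDerivAt (fun s => u s i) (-(v t i * grad Loss (θ t) i)) t)
    (hflowv : ∀ t ≥ (0:ℝ), ∀ i,
      HasDerivAt (fun s => v s i) (-(u t i * grad Loss (θ t) i)) t)
    (ξ : ℝ → Fin d → ℝ)
    (hξ : ∀ t i, ξ t i = -∫ s in (0:ℝ)..t, grad Loss (θ s) i)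
    (hinit : ∀ i, u 0 i ^ 2 ≠ v 0 i ^ 2) :
    ∀ t ≥ (0:ℝ), ∀ i,
      θ t i = |u 0 i ^ 2 - v 0 i ^ 2| / 2 *
        Real.sinh (2 * ξ t i + Real.log |(u 0 i + v 0 i) / (u 0 i - v 0 i)|) := by
  have hcu : ∀ i, ∀ s ∈ Ici (0:ℝ), ContinuousAt (fun r => u r i) s :=
    fun i s hs => (hflowu s hs i).continuousAt
  have hcv : ∀ i, ∀ s ∈ Ici (0:ℝ), ContinuousAt (fun r => v r i) s :=
    fun i s hs => (hflowv s hs i).continuousAt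
  have hcθ : ContinuousOn θ (Ici (0:ℝ)) := by
    rw [continuousOn_pi]
    intro j s hs
    have : ContinuousAt (fun r => u r j * v r j) s := (hcu j s hs).mul (hcv j s hs)
    exact (this.congr (by filter_upwards with r using (hθ r j).symm)).continuousWithinAt
  intro t ht i
  have hgrad : Continuous (fun x => grad Loss x i) :=
    (hLoss.continuous_fderiv one_ne_zero).clm_apply continuous_const
  set G : ℝ → ℝ := fun s => grad Loss (θ (max s 0)) i with hGdef
  have hGc : Continuous G :=
    hgrad.comp (hcθ.comp_continuous (continuous_id.max continuous_const)
      (fun x => Set.mem_Ici.mpr (le_max_right _ _)))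
  set Ξ : ℝ → ℝ := fun s => ∫ r in (0:ℝ)..s, G r with hΞdef
  have hΞd : ∀ s : ℝ, HasDerivAt Ξ (G s) s := fun s =>
    (hGc.integral_hasStrictDerivAt 0 s).hasDerivAt
  have hΞc : Continuous Ξ := continuous_iff_continuousAt.mpr fun s => (hΞd s).continuousAt
  have hξΞ : ∀ s ∈ Ici (0:ℝ), ξ s i = -Ξ s := by
    intro s hs
    rw [hξ]
    congr 1
    apply intervalIntegral.integral_congr
    intro x hx
    rw [Set.uIcc_of_le hs] at hx
    simp only [hGdef, max_eq_left hx.1]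
  have hGs : ∀ s : ℝ, 0 ≤ s → G s = grad Loss (θ s) i := by
    intro s hs; simp only [hGdef, max_eq_left hs]
  -- conservation law
  have key : ∀ (w : ℝ → ℝ) (ε : ℝ), (∀ s ∈ Ici (0:ℝ), ContinuousAt w s) →
      (∀ s ∈ Ico (0:ℝ) t, HasDerivAt w (ε * w s * G s) s) →
      w t = w 0 * Real.exp (ε * Ξ t) := by
    intro w ε hwc hwd
    have hconst := constant_of_has_deriv_right_zero
      (f := fun s => w s * Real.exp (-ε * Ξ s)) (a := 0) (b := t)
      ?_ ?_ t (right_mem_Icc.mpr ht)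
    · have h0 : Ξ 0 = 0 := intervalIntegral.integral_same
      have hconst : w t * Real.exp (-ε * Ξ t) = w 0 * Real.exp (-ε * Ξ 0) := hconst
      rw [h0, mul_zero, Real.exp_zero, mul_one] at hconst
      have := congrArg (fun y => y * Real.exp (ε * Ξ t)) hconst
      simp only [mul_assoc, ← Real.exp_add] at this
      rw [show -ε * Ξ t + ε * Ξ t = 0 by ring, Real.exp_zero, mul_one] at this
      exact this
    · intro s hs
      exact ((hwc s hs.1).mul
        (Real.continuous_exp.comp (continuous_const.mul hΞc)).continuousAt).continuousWithinAt
    · intro s hs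
      have hd : HasDerivAt (fun r => w r * Real.exp (-ε * Ξ r))
          ((ε * w s * G s) * Real.exp (-ε * Ξ s) +
            w s * (Real.exp (-ε * Ξ s) * (-ε * G s))) s :=
        (hwd s hs).mul (((hΞd s).const_mul (-ε)).exp)
      have : (ε * w s * G s) * Real.exp (-ε * Ξ s) +
          w s * (Real.exp (-ε * Ξ s) * (-ε * G s)) = 0 := by ring
      rw [this] at hd
      exact hd.hasDerivWithinAt
  -- apply to u+v and u-v
  have hP : u t i + v t i = (u 0 i + v 0 i) * Real.exp (-(1:ℝ) * Ξ t) := by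
    apply key _ (-1)
    · intro s hs; exact (hcu i s hs).add (hcv i s hs)
    · intro s hs
      have h := (hflowu s hs.1 i).add (hflowv s hs.1 i)
      refine h.congr_deriv ?_
      rw [hGs s hs.1]; ring
  have hQ : u t i - v t i = (u 0 i - v 0 i) * Real.exp ((1:ℝ) * Ξ t) := by
    apply key _ 1
    · intro s hs; exact (hcu i s hs).sub (hcv i s hs)
    · intro s hs
      have h := (hflowu s hs.1 i).sub (hflowv s hs.1 i)
      refine h.congr_deriv ?_
      rw [hGs s hs.1]; ring
  have hab1 : u 0 i + v 0 i ≠ 0 := by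
    intro h; apply hinit i; linear_combination (u 0 i - v 0 i) * h
  have hab2 : u 0 i - v 0 i ≠ 0 := by
    intro h; apply hinit i; linear_combination (u 0 i + v 0 i) * h
  have hξt := hξΞ t ht
  rw [key_alg _ _ _ hab1 hab2, hθ,
    show u t i * v t i = ((u t i + v t i)^2 - (u t i - v t i)^2)/4 by ring,
    hP, hQ, mul_pow, mul_pow, sq (Real.exp _), ← Real.exp_add,
    sq (Real.exp ((1:ℝ) * Ξ t)), ← Real.exp_add]
  rw [show (-(1:ℝ)) * Ξ t + -(1:ℝ) * Ξ t = 2 * ξ t i by rw [hξt]; ring,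
    show (1:ℝ) * Ξ t + (1:ℝ) * Ξ t = -(2 * ξ t i) by rw [hξt]; ring]
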